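/- For n ≥ 1, if b is a border of M_{2n+1}, then φ(b)·0 is a border of M_{2n+2}. -/

import Mathlib

/-- The Fibonacci morphism: `false` (=0) ↦ 01, `true` (=1) ↦ 0. -/
def phi (w : List Bool) : List Bool :=
  w.flatMap (fun b => if b then [false] else [false, true])

/-- The Fibonacci words: f₁ = 1, f₂ = 0, f_{n+2} = f_{n+1} f_n. -/
def fw : ℕ → List Bool
  | 0 => []
  | 1 => [true]
  | 2 => [false]
  | (n+3) => fw (n+2) ++ fw (n+1)

/-- Palindromic prefix: f_n with its last two letters removed. -/
def pw (n : ℕ) : List Bool := (fw n).dropLast.dropLast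

/-- Minimal forbidden words of the Fibonacci word:
`M_{2n+1} = 1 p_{2n+1} 1`, `M_{2n+2} = 0 p_{2n+2} 0`. -/
def Mw (n : ℕ) : List Bool :=
  if n % 2 = 0 then false :: (pw n ++ [false]) else true :: (pw n ++ [true])

/-- Correlation bit: `corr u v k` holds iff `C_{u,v}[k] = 1`. -/
def corr {α : Type*} (u v : List α) (k : ℕ) : Prop :=
  ∀ i j : ℕ, i < u.length → j < v.length → i = j + k → u[i]? = v[j]?

/-- A border of a word is both a prefix and a suffix. -/
def IsBorder {α : Type*} (b w : List α) : Prop := b <+: w ∧ b <:+ w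

/-- The set of nonempty borders of `M_n`. -/
def Bset (n : ℕ) : Set (List Bool) := {b | b ≠ [] ∧ IsBorder b (Mw n)}

open scoped Classical in
/-- The correlation polynomial `C_{u,v}(z) = ∑_{k<|u|} C_{u,v}[k] z^{|u|-1-k}`. -/
noncomputable def corrPoly (u v : List Bool) : Polynomial ℤ :=
  ∑ k ∈ Finset.range u.length,
    if corr u v k then Polynomial.X ^ (u.length - 1 - k) else 0

open scoped Classical in
/-- The nonempty borders of `w`, as a finset. -/
noncomputable def borderFinset (w : List Bool) : Finset (List Bool) :=
  ((Finset.range (w.length + 1)).image (fun k => w.take k)).filter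
    (fun b => b ≠ [] ∧ b <:+ w)


lemma phi_append (u v : List Bool) : phi (u ++ v) = phi u ++ phi v := by
  simp [phi]

lemma phi_fw : ∀ k, phi (fw (k+1)) = fw (k+2)
  | 0 => rfl
  | 1 => rfl
  | (k+2) => by
    show phi (fw (k+3)) = fw (k+4)
    rw [show fw (k+3) = fw (k+2) ++ fw (k+1) from rfl, phi_append,
        phi_fw (k+1), phi_fw k]
    rfl

lemma fw_suffix : ∀ n, ∃ u v, fw (2*n+3) = u ++ [false, true] ∧
    fw (2*n+4) = v ++ [true, false]
  | 0 => ⟨[], [false], rfl, rfl⟩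
  | (n+1) => by
    obtain ⟨u, v, hu, hv⟩ := fw_suffix n
    refine ⟨fw (2*n+4) ++ u, fw (2*n+5) ++ v, ?_, ?_⟩
    · rw [show (2*(n+1)+3) = (2*n+2)+3 from rfl,
        show fw ((2*n+2)+3) = fw (2*n+4) ++ fw (2*n+3) from rfl, hu, List.append_assoc]
    · rw [show (2*(n+1)+4) = (2*n+3)+3 from rfl,
        show fw ((2*n+3)+3) = fw (2*n+5) ++ fw (2*n+4) from rfl, hv, List.append_assoc]

lemma drop2 (u : List Bool) (a c : Bool) : (u ++ [a, c]).dropLast.dropLast = u := by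
  rw [show u ++ [a, c] = (u ++ [a]) ++ [c] by simp, List.dropLast_concat,
    List.dropLast_concat]

lemma Mw_phi (n : ℕ) (hn : 1 ≤ n) : Mw (2*n+2) = phi (Mw (2*n+1)) ++ [false] := by
  obtain ⟨m, rfl⟩ := Nat.exists_eq_add_of_le hn
  obtain ⟨u, v, hu, hv⟩ := fw_suffix m
  have h1 : 2*(1+m)+1 = 2*m+3 := by ring
  have h2 : 2*(1+m)+2 = 2*m+4 := by ring
  have hpu : pw (2*m+3) = u := by rw [pw, hu, drop2]
  have hpv : pw (2*m+4) = v := by rw [pw, hv, drop2]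
  have hphiu : phi u ++ [false] = v := by
    have := phi_fw (2*m+2)
    rw [show (2*m+2)+1 = 2*m+3 from rfl, show (2*m+2)+2 = 2*m+4 from rfl, hu, hv,
      phi_append] at this
    have : (phi u ++ [false]) ++ [true, false] = v ++ [true, false] := by
      simpa [phi] using this
    exact List.append_cancel_right this
  have e1 : ¬ (2*m+3) % 2 = 0 := by omega
  have e2 : (2*m+4) % 2 = 0 := by omega
  rw [h1, h2, Mw, Mw, if_pos e2, if_neg e1, hpu, hpv]
  simp [phi_append, phi, ← hphiu]

lemma phi_prefix (b w : List Bool) (h : b <+: w) :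
    phi b ++ [false] <+: phi w ++ [false] := by
  obtain ⟨t, rfl⟩ := h
  rcases t with _ | ⟨c, t⟩
  · simp
  · refine (List.IsPrefix.trans ?_ (List.prefix_append _ [false]))
    rw [phi_append]
    cases c
    · exact ⟨true :: phi t, by simp [phi]⟩
    · exact ⟨phi t, by simp [phi]⟩

theorem stmt10'_placeholder : True := trivial

theorem stmt10 (n : ℕ) (hn : 1 ≤ n) (b : List Bool) (hb : IsBorder b (Mw (2*n+1))) :
    IsBorder (phi b ++ [false]) (Mw (2*n+2)) := by
  obtain ⟨hp, hs⟩ := hb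
  rw [Mw_phi n hn]
  constructor
  · exact phi_prefix b _ hp
  · obtain ⟨t, ht⟩ := hs
    exact ⟨phi t, by rw [← List.append_assoc, ← phi_append, ht]⟩
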